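/- If a group homomorphism between Polish groups is Baire-measurable, then it is continuous. -/

import Mathlib

open Topology Set Filter Pointwise

/-- A nonempty open set in a Baire space is not meager. -/
lemma pettis_aux_open_not_meagre {X : Type*} [TopologicalSpace X] [BaireSpace X]
    {U : Set X} (hU : IsOpen U) (hne : U.Nonempty) : ¬ IsMeagre U := by
  intro h
  have hd : Dense Uᶜ := dense_of_mem_residual h
  obtain ⟨x, hx, hxc⟩ := hd.inter_open_nonempty U hU hne
  exact hxc hx

/-- Meagerness is preserved under preimage by right multiplication. -/
lemma pettis_aux_meagre_mul_right {G : Type*} [Group G] [TopologicalSpace G]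
    [IsTopologicalGroup G] {M : Set G} (hM : IsMeagre M) (g : G) :
    IsMeagre ((fun x => x * g) ⁻¹' M) :=
  hM.preimage_of_isOpenMap (Homeomorph.mulRight g).continuous
    (Homeomorph.mulRight g).isOpenMap

/-- Pettis' difference lemma: if `A` is a nonmeager Baire measurable set in a
topological group which is a Baire space, then `A⁻¹ * A` is a neighborhood of `1`. -/
lemma pettis_difference {G : Type*} [Group G] [TopologicalSpace G] [IsTopologicalGroup G]
    [BaireSpace G] {A : Set G} (hA : BaireMeasurableSet A) (hnm : ¬ IsMeagre A) :
    A⁻¹ * A ∈ 𝓝 (1 : G) := by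
  obtain ⟨U, hUo, hAU⟩ := hA.residualEq_isOpen
  -- the symmetric difference is meager
  have hM : IsMeagre ((A \ U) ∪ (U \ A)) := by
    rw [IsMeagre]
    have h := (Filter.eventuallyEq_set.mp hAU)
    filter_upwards [h] with x hx
    simp only [mem_compl_iff, mem_union, mem_diff]
    tauto
  set M := (A \ U) ∪ (U \ A) with hMdef
  -- U is nonempty
  have hUne : U.Nonempty := by
    rcases Set.eq_empty_or_nonempty U with h | h
    · exfalso
      apply hnm
      apply hM.mono
      intro x hx
      simp [hMdef, h, hx]
    · exact h
  -- U⁻¹ * U ⊆ A⁻¹ * A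
  have key : U⁻¹ * U ⊆ A⁻¹ * A := by
    rintro g ⟨u₁, hu₁, u₂, hu₂, rfl⟩
    rw [Set.mem_inv] at hu₁
    -- consider V = U ∩ {x | x * (u₁ * u₂)⁻¹ ∈ U}, open and nonempty
    set g := u₁ * u₂ with hg
    have hVo : IsOpen (U ∩ (fun x => x * g⁻¹) ⁻¹' U) :=
      hUo.inter (hUo.preimage (continuous_mul_right g⁻¹))
    have hVne : (U ∩ (fun x => x * g⁻¹) ⁻¹' U).Nonempty := by
      refine ⟨u₂, hu₂, ?_⟩
      simp only [Set.mem_preimage, hg]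
      have : u₂ * (u₁ * u₂)⁻¹ = u₁⁻¹ := by group
      rw [this]; exact hu₁
    -- remove the meager sets M and (· * g⁻¹) ⁻¹' M
    have hS : IsMeagre (M ∪ (fun x => x * g⁻¹) ⁻¹' M) := by
      have h2 := pettis_aux_meagre_mul_right hM g⁻¹
      rw [IsMeagre, Set.compl_union]
      exact Filter.inter_mem hM h2
    have : ((U ∩ (fun x => x * g⁻¹) ⁻¹' U) \ (M ∪ (fun x => x * g⁻¹) ⁻¹' M)).Nonempty := by
      by_contra h
      rw [Set.not_nonempty_iff_eq_empty, Set.diff_eq_empty] at h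
      exact pettis_aux_open_not_meagre hVo hVne (hS.mono h)
    obtain ⟨x, ⟨hxU, hxU'⟩, hxM⟩ := this
    simp only [Set.mem_union, Set.mem_preimage, not_or] at hxM
    have hxA : x ∈ A := by
      by_contra h
      exact hxM.1 (Or.inr ⟨hxU, h⟩)
    have hxA' : x * g⁻¹ ∈ A := by
      by_contra h
      exact hxM.2 (Or.inr ⟨hxU', h⟩)
    refine ⟨(x * g⁻¹)⁻¹, Set.inv_mem_inv.mpr hxA', x, hxA, ?_⟩
    simp only [hg]; group
  have h1 : (1 : G) ∈ U⁻¹ * U := by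
    obtain ⟨u, hu⟩ := hUne
    exact ⟨u⁻¹, Set.inv_mem_inv.mpr hu, u, hu, inv_mul_cancel u⟩
  exact Filter.mem_of_superset ((hUo.mul_left).mem_nhds h1) key

/-- Splitting a neighborhood of 1: find open `W` with `W⁻¹ * W ⊆ V`. -/
lemma pettis_split {H : Type*} [Group H] [TopologicalSpace H] [IsTopologicalGroup H]
    {V : Set H} (hV : V ∈ 𝓝 (1 : H)) :
    ∃ W : Set H, IsOpen W ∧ (1 : H) ∈ W ∧ W⁻¹ * W ⊆ V := by
  have hc : Continuous (fun p : H × H => p.1⁻¹ * p.2) :=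
    (continuous_inv.comp continuous_fst).mul continuous_snd
  have h : (fun p : H × H => p.1⁻¹ * p.2) ⁻¹' V ∈ 𝓝 ((1 : H), (1 : H)) := by
    apply hc.continuousAt.preimage_mem_nhds
    simpa using hV
  rw [nhds_prod_eq, Filter.mem_prod_iff] at h
  obtain ⟨s, hs, t, ht, hst⟩ := h
  obtain ⟨s', hs's, hs'o, hs'1⟩ := mem_nhds_iff.mp hs
  obtain ⟨t', ht't, ht'o, ht'1⟩ := mem_nhds_iff.mp ht
  refine ⟨s' ∩ t', hs'o.inter ht'o, ⟨hs'1, ht'1⟩, ?_⟩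
  rintro x ⟨a, ha, b, hb, rfl⟩
  rw [Set.mem_inv] at ha
  have : (a⁻¹, b) ∈ s ×ˢ t := ⟨hs's ha.1, ht't hb.2⟩
  have := hst this
  simpa using this

/-- Pettis: a Baire-measurable group homomorphism between Polish groups is
continuous. -/
theorem stmt_12 {G H : Type*} [Group G] [TopologicalSpace G] [IsTopologicalGroup G]
    [PolishSpace G] [Group H] [TopologicalSpace H] [IsTopologicalGroup H]
    [PolishSpace H] (f : G →* H)
    (hf : ∀ U : Set H, IsOpen U → BaireMeasurableSet (f ⁻¹' U)) :
    Continuous f := by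
  have hBaire : BaireSpace G := by
    letI := TopologicalSpace.upgradeIsCompletelyMetrizable G
    infer_instance
  haveI : TopologicalSpace.SeparableSpace H :=
    TopologicalSpace.SecondCountableTopology.to_separableSpace
  apply continuous_of_continuousAt_one f
  rw [ContinuousAt, map_one]
  intro V hV
  rw [Filter.mem_map]
  obtain ⟨W, hWo, hW1, hWV⟩ := pettis_split hV
  -- countable dense set in H
  obtain ⟨D, hDc, hDd⟩ := TopologicalSpace.exists_countable_dense H
  -- the translates d • W for d ∈ D cover H
  have hcover : (Set.univ : Set G) ⊆ ⋃ d ∈ D, f ⁻¹' (d • W) := by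
    intro x _
    have hne : ((f x) • W⁻¹).Nonempty :=
      ⟨f x, Set.mem_smul_set.mpr ⟨1, by simpa using hW1, mul_one _⟩⟩
    obtain ⟨d, hdW, hdD⟩ := hDd.inter_open_nonempty _ ((hWo.inv).smul (f x)) hne
    refine Set.mem_biUnion hdD ?_
    obtain ⟨w, hw, hwe⟩ := Set.mem_smul_set.mp hdW
    rw [Set.mem_inv] at hw
    rw [Set.mem_preimage]
    refine Set.mem_smul_set.mpr ⟨w⁻¹, hw, ?_⟩
    rw [smul_eq_mul] at hwe ⊢
    rw [← hwe]
    group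
  -- some translate preimage is nonmeager
  have hnm : ∃ d ∈ D, ¬ IsMeagre (f ⁻¹' (d • W)) := by
    by_contra h
    push_neg at h
    have : IsMeagre (⋃ d ∈ D, f ⁻¹' (d • W)) := by
      rw [IsMeagre, Set.compl_iUnion₂]
      exact (countable_bInter_mem hDc).mpr fun d hd => h d hd
    have huniv : IsMeagre (Set.univ : Set G) := this.mono hcover
    exact pettis_aux_open_not_meagre isOpen_univ ⟨1, trivial⟩ huniv
  obtain ⟨d, _, hdnm⟩ := hnm
  set A := f ⁻¹' (d • W) with hAdef
  have hAbm : BaireMeasurableSet A := hf _ (hWo.smul d)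
  have hmem : A⁻¹ * A ∈ 𝓝 (1 : G) := pettis_difference hAbm hdnm
  apply Filter.mem_of_superset hmem
  rintro x ⟨a, ha, b, hb, rfl⟩
  rw [Set.mem_inv, hAdef, Set.mem_preimage] at ha
  rw [hAdef, Set.mem_preimage] at hb
  obtain ⟨w₁, hw₁, he₁⟩ := Set.mem_smul_set.mp ha
  obtain ⟨w₂, hw₂, he₂⟩ := Set.mem_smul_set.mp hb
  have e1 : d * w₁ = (f a)⁻¹ := by simpa [map_inv] using he₁
  have e2 : d * w₂ = f b := by simpa using he₂
  show f (a * b) ∈ V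
  apply hWV
  refine ⟨w₁⁻¹, Set.inv_mem_inv.mpr hw₁, w₂, hw₂, ?_⟩
  show w₁⁻¹ * w₂ = f (a * b)
  have : w₁⁻¹ * w₂ = (d * w₁)⁻¹ * (d * w₂) := by group
  rw [this, e1, e2, map_mul]
  group
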